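/- Let M be a smooth finite-dimensional manifold, x ∈ M, and s : M → M a smooth diffeomorphism with s(x) = x whose differential at x equals −id on T_xM. Then for all smooth vector fields X, Y on M, [X, Y + s_*Y]_x = [X, s_*Y + s_*(s_*Y)]_x; equivalently, the connection (∇^s_X Y)_x := (1/2)[X, Y + s_*Y]_x satisfies (∇^s_{X_x} Y) = (∇^s_{X_x} (s_*Y)), i.e. ∇^s admits the 2-jet of s at x as an affine 2-jet. -/

import Mathlib

open scoped Manifold
local notation "∞" => (⊤ : ℕ∞)

/-- The pushforward of a vector field (viewed, as is standard, as a derivation of the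
algebra of smooth functions) along a diffeomorphism `s` with smooth inverse `sinv`:
`(s_*Y) f = (Y (f ∘ s)) ∘ s⁻¹`. -/
noncomputable def pushforwardVF
    {E : Type*} [NormedAddCommGroup E] [NormedSpace ℝ E]
    {H : Type*} [TopologicalSpace H] {I : ModelWithCorners ℝ E H}
    {M : Type*} [TopologicalSpace M] [ChartedSpace H M]
    (s sinv : C^∞⟮I, M; I, M⟯) (hs : ∀ z : M, s (sinv z) = z)
    (Y : Derivation ℝ C^∞⟮I, M; ℝ⟯ C^∞⟮I, M; ℝ⟯) :
    Derivation ℝ C^∞⟮I, M; ℝ⟯ C^∞⟮I, M; ℝ⟯ :=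
  Derivation.mk'
    { toFun := fun f => (Y (f.comp s)).comp sinv
      map_add' := fun f g => by
        show (Y ((f + g).comp s)).comp sinv
            = (Y (f.comp s)).comp sinv + (Y (g.comp s)).comp sinv
        rw [ContMDiffMap.add_comp, map_add, ContMDiffMap.add_comp]
      map_smul' := fun c f => by
        show (Y ((c • f).comp s)).comp sinv = c • (Y (f.comp s)).comp sinv
        rw [ContMDiffMap.smul_comp, Derivation.map_smul, ContMDiffMap.smul_comp] }
    (fun f g => by
      show (Y ((f * g).comp s)).comp sinv
          = f • (Y (g.comp s)).comp sinv + g • (Y (f.comp s)).comp sinv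
      rw [ContMDiffMap.mul_comp, Derivation.leibniz]
      ext z
      simp [hs z])

/-- (Lemma 1.8.) Let `M` be a smooth finite-dimensional manifold,
`x ∈ M`, and `s` a smooth diffeomorphism of `M` (with smooth inverse `sinv`) such
that `s x = x` and whose differential at `x` is `-id` on `T_xM`. Then for all smooth
vector fields `X, Y`, `[X, Y + s_*Y]_x = [X, s_*Y + s_*(s_*Y)]_x`; equivalently, the
connection `(∇^s_X Y)_x := (1/2)[X, Y + s_*Y]_x` satisfies `∇^s_{X_x} Y = ∇^s_{X_x}(s_*Y)`,
i.e. `∇^s` admits the 2-jet of `s` at `x` as an affine 2-jet. -/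
theorem statement3
    {E : Type*} [NormedAddCommGroup E] [NormedSpace ℝ E] [FiniteDimensional ℝ E]
    {H : Type*} [TopologicalSpace H] {I : ModelWithCorners ℝ E H} [I.Boundaryless]
    {M : Type*} [TopologicalSpace M] [ChartedSpace H M] [IsManifold I ∞ M]
    [T2Space M]
    (x : M) (s sinv : C^∞⟮I, M; I, M⟯)
    (hinv : ∀ z : M, s (sinv z) = z) (hinv' : ∀ z : M, sinv (s z) = z)
    (hsx : s x = x)
    (hds : ∀ v : PointDerivation I x, 𝒅ₕ hsx v = -v) :
    ∀ X Y : Derivation ℝ C^∞⟮I, M; ℝ⟯ C^∞⟮I, M; ℝ⟯,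
      Derivation.evalAt x ⁅X, Y + pushforwardVF s sinv hinv Y⁆
        = Derivation.evalAt x
            ⁅X, pushforwardVF s sinv hinv Y
                + pushforwardVF s sinv hinv (pushforwardVF s sinv hinv Y)⁆ := by
  intro X Y
  -- basic consequences of the hypotheses
  have hsinvx : sinv x = x := by
    conv_lhs => rw [← hsx]
    exact hinv' x
  have key1 : ∀ (v : PointDerivation I x) (g : C^∞⟮I, M; ℝ⟯),
      v (g.comp s) = - v g := by
    intro v g
    have h1 : (𝒅ₕ hsx) v g = v (g.comp s) := rfl
    rw [← h1, hds v]
    simp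
    rfl
  have key2 : ∀ (v : PointDerivation I x) (g : C^∞⟮I, M; ℝ⟯),
      v (g.comp sinv) = - v g := by
    intro v g
    have hgs : (g.comp sinv).comp s = g := by
      ext z
      simp [hinv' z]
    have h2 := key1 v (g.comp sinv)
    rw [hgs] at h2
    linarith
  set W := pushforwardVF s sinv hinv Y with hWdef
  have Wapp : ∀ g : C^∞⟮I, M; ℝ⟯, W g = (Y (g.comp s)).comp sinv := fun g => rfl
  have Wx : ∀ g : C^∞⟮I, M; ℝ⟯, (W g) x = - (Y g) x := by
    intro g
    have h1 : (W g) x = (Y (g.comp s)) (sinv x) := rfl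
    have h2 := key1 (Derivation.evalAt x Y) g
    simp only [Derivation.evalAt_apply] at h2
    rw [h1, hsinvx, h2]
  have W'x : ∀ g : C^∞⟮I, M; ℝ⟯, (pushforwardVF s sinv hinv W g) x = (Y g) x := by
    intro g
    have h1 : (pushforwardVF s sinv hinv W g) x = (W (g.comp s)) (sinv x) := rfl
    have h2 := key1 (Derivation.evalAt x Y) g
    simp only [Derivation.evalAt_apply] at h2
    rw [h1, hsinvx, Wx (g.comp s), h2]
    ring
  -- `Y (h ∘ s) = (W h) ∘ s`
  have Ycomp : ∀ h : C^∞⟮I, M; ℝ⟯, Y (h.comp s) = (W h).comp s := by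
    intro h
    ext z
    have : (W h).comp s z = (Y (h.comp s)) (sinv (s z)) := rfl
    rw [this, hinv' z]
  -- consequence: `X (Y (h ∘ s)) x = - X (W h) x`
  have XYs : ∀ h : C^∞⟮I, M; ℝ⟯, (X (Y (h.comp s))) x = - (X (W h)) x := by
    intro h
    rw [Ycomp h]
    have h2 := key1 (Derivation.evalAt x X) (W h)
    simpa only [Derivation.evalAt_apply] using h2
  -- the second-order key claim
  have claim : ∀ f : C^∞⟮I, M; ℝ⟯,
      (X (Y ((f.comp s).comp s))) x = (X (Y f)) x := by
    intro f
    set q : C^∞⟮I, M; ℝ⟯ := f.comp s + f with hq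
    have hqs : q.comp s = (f.comp s).comp s + f.comp s := by
      rw [hq, ContMDiffMap.add_comp]
    -- `X ((Y + W) q) x = 0`
    have hVq : (X (Y q)) x + (X (W q)) x = 0 := by
      have hcomm := Derivation.commutator_apply (D1 := X) (D2 := Y + W) q
      have hcx := congrArg (fun u : C^∞⟮I, M; ℝ⟯ => u x) hcomm
      simp only [Derivation.add_apply, map_add, ContMDiffMap.coe_sub, ContMDiffMap.coe_add,
        Pi.sub_apply, Pi.add_apply] at hcx
      -- evaluate the two other terms
      have t1 : (Y (X q)) x + (W (X q)) x = 0 := by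
        rw [Wx (X q)]; ring
      have t2 : (⁅X, Y + W⁆ q) x = 0 := by
        have hu := key1 (Derivation.evalAt x ⁅X, Y + W⁆) f
        simp only [Derivation.evalAt_apply] at hu
        have : (⁅X, Y + W⁆ q) x = (⁅X, Y + W⁆ (f.comp s)) x + (⁅X, Y + W⁆ f) x := by
          rw [hq, map_add]; simp
        rw [this, hu]; ring
      rw [t2] at hcx
      linarith
    have e1 : (X (Y (q.comp s))) x = - (X (W q)) x := XYs q
    have e2 : (X (Y (f.comp s))) x = - (X (W f)) x := XYs f
    have e3 : (X (Y ((f.comp s).comp s))) x = (X (Y (q.comp s))) x - (X (Y (f.comp s))) x := by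
      rw [hqs, map_add, map_add]; simp
    have e4 : (X (Y q)) x = (X (Y (f.comp s))) x + (X (Y f)) x := by
      rw [hq, map_add, map_add]; simp
    rw [e3, e1, e2]
    linarith
  -- assemble
  ext (f : C^∞⟮I, M; ℝ⟯)
  simp only [Derivation.evalAt_apply, Derivation.commutator_apply, Derivation.add_apply,
    map_add, ContMDiffMap.coe_sub, ContMDiffMap.coe_add, Pi.sub_apply, Pi.add_apply]
  -- reduce to `X (Y f) x - Y (X f) x = X (W' f) x - W' (X f) x`
  have hW'f : (X (pushforwardVF s sinv hinv W f)) x = (X (Y ((f.comp s).comp s))) x := by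
    have h1 : pushforwardVF s sinv hinv W f
        = ((Y ((f.comp s).comp s)).comp sinv).comp sinv := rfl
    have h2 := key2 (Derivation.evalAt x X) ((Y ((f.comp s).comp s)).comp sinv)
    have h3 := key2 (Derivation.evalAt x X) (Y ((f.comp s).comp s))
    simp only [Derivation.evalAt_apply] at h2 h3
    rw [h1, h2, h3]; ring
  have hW'Xf : (pushforwardVF s sinv hinv W (X f)) x = (Y (X f)) x := W'x (X f)
  rw [hW'f, claim f, hW'Xf]
  ring
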